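/- Let G = (V, E) be a finite simple graph with nonempty vertex set and let d ≥ 1 be an integer. Then δ_loc(G) = d − 1 if and only if G has a d-locally evenly seen set and no (d−1)-locally evenly seen set. -/

import Mathlib

open SimpleGraph

variable {V : Type*}

/-- Local complementation of `G` at the vertex `v`: adjacency among the
neighbors of `v` is complemented, i.e. the edge set is `E Δ K_v`. -/
def localComp (G : SimpleGraph V) (v : V) : SimpleGraph V where
  Adj u w := u ≠ w ∧ ¬ (G.Adj u w ↔ (G.Adj v u ∧ G.Adj v w))
  symm := by
    constructor
    intro u w h
    refine ⟨h.1.symm, ?_⟩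
    have h1 := G.adj_comm u w
    have h2 := h.2
    tauto
  loopless := by
    constructor
    intro u h
    exact h.1 rfl

/-- The minimal vertex degree `δ(G)` of a graph. -/
noncomputable def minDegree (G : SimpleGraph V) : ℕ :=
  sInf (Set.range fun v => (G.neighborSet v).ncard)

/-- The minimal degree under local complementation `δ_loc(G)`: the minimum of
`δ(G')` over all graphs `G'` obtainable from `G` by a finite sequence of
local complementations. -/
noncomputable def minDegreeLoc (G : SimpleGraph V) : ℕ :=
  sInf {n | ∃ l : List V, minDegree (l.foldl localComp G) = n}

/-- `D` is an evenly seen set if every vertex outside `D` has an even number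
of neighbors in `D`. -/
def EvenlySeen (G : SimpleGraph V) (D : Set V) : Prop :=
  ∀ u ∉ D, Even ((G.neighborSet u ∩ D).ncard)

/-- A nonempty set `K` is `d`-locally evenly seen if there is a set `D` with
`K ⊆ D ⊆ V` and `|D| = d` such that every vertex outside `D` has an even
number of neighbors in `K`. -/
def LocallyEvenlySeen (G : SimpleGraph V) (d : ℕ) (K : Set V) : Prop :=
  K.Nonempty ∧ ∃ D : Set V, K ⊆ D ∧ D.ncard = d ∧
    ∀ u ∉ D, Even ((G.neighborSet u ∩ K).ncard)


section Par

set_option linter.unusedSectionVars false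

lemma localComp_adj (G : SimpleGraph V) (v u w : V) :
    (localComp G v).Adj u w ↔ u ≠ w ∧ ¬ (G.Adj u w ↔ (G.Adj v u ∧ G.Adj v w)) := Iff.rfl

lemma localComp_adj_base (G : SimpleGraph V) (v u : V) :
    (localComp G v).Adj v u ↔ G.Adj v u := by
  rw [localComp_adj]
  constructor
  · intro ⟨h1, h2⟩
    by_cases h : G.Adj v u
    · exact h
    · exact absurd (iff_of_false h (fun hc => h hc.2)) h2
  · intro h
    exact ⟨(G.ne_of_adj h), fun hc => (G.irrefl (hc.mp h).1)⟩

lemma localComp_adj_right (G : SimpleGraph V) (v u : V) :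
    (localComp G v).Adj u v ↔ G.Adj u v := by
  rw [adj_comm, localComp_adj_base, adj_comm]

lemma localComp_involutive (G : SimpleGraph V) (v : V) :
    localComp (localComp G v) v = G := by
  ext u w
  rw [localComp_adj, localComp_adj_base, localComp_adj_base, localComp_adj]
  constructor
  · rintro ⟨h1, h2⟩
    by_cases hA : G.Adj u w <;> by_cases hB : G.Adj v u <;> by_cases hC : G.Adj v w <;> tauto
  · intro h
    have h1 : u ≠ w := G.ne_of_adj h
    by_cases hB : G.Adj v u <;> by_cases hC : G.Adj v w <;> tauto

section Par

open Classical in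
noncomputable def indP (P : Prop) : ZMod 2 := if P then 1 else 0

lemma indP_true {P : Prop} (h : P) : indP P = 1 := by simp [indP, h]
lemma indP_false {P : Prop} (h : ¬ P) : indP P = 0 := by simp [indP, h]

lemma indP_mul (P Q : Prop) : indP P * indP Q = indP (P ∧ Q) := by
  by_cases hP : P <;> by_cases hQ : Q <;> simp [indP, hP, hQ]

lemma zmod2_cases (x : ZMod 2) : x = 0 ∨ x = 1 := by revert x; decide

lemma zmod2_eq_one_iff (x : ZMod 2) : x = 1 ↔ ¬ x = 0 := by revert x; decide

variable [Fintype V]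

noncomputable def Fpar (G : SimpleGraph V) (K : Set V) (u : V) : ZMod 2 :=
  ∑ w : V, indP (G.Adj u w) * indP (w ∈ K)

noncomputable def suppF (G : SimpleGraph V) (K : Set V) : Set V := {u | Fpar G K u = 1}

noncomputable def valF (G : SimpleGraph V) (K : Set V) : ℕ := (K ∪ suppF G K).ncard

lemma even_iff_Fpar (G : SimpleGraph V) (K : Set V) (u : V) :
    Even ((G.neighborSet u ∩ K).ncard) ↔ Fpar G K u = 0 := by
  classical
  have h1 : (G.neighborSet u ∩ K).ncard
      = (Finset.univ.filter fun w => G.Adj u w ∧ w ∈ K).card := by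
    rw [Set.ncard_eq_toFinset_card _ (Set.toFinite _)]
    congr 1
    ext w
    simp [Set.Finite.mem_toFinset, SimpleGraph.mem_neighborSet, Set.mem_inter_iff]
  have h2 : Fpar G K u = ((Finset.univ.filter fun w => G.Adj u w ∧ w ∈ K).card : ZMod 2) := by
    rw [Fpar]
    simp_rw [indP_mul]
    rw [eq_comm, Finset.natCast_card_filter]
    congr 1
    ext w
    by_cases h : G.Adj u w ∧ w ∈ K <;> simp [indP, h]
  rw [h1, h2, ZMod.natCast_eq_zero_iff, Nat.even_iff, Nat.dvd_iff_mod_eq_zero]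

lemma indP_localComp (G : SimpleGraph V) (v u w : V) :
    indP ((localComp G v).Adj u w)
      = indP (G.Adj u w) + indP (G.Adj v u) * indP (G.Adj v w)
        + indP (w = u) * indP (G.Adj v u) := by
  by_cases huw : w = u
  · subst huw
    rw [indP_true rfl, indP_false (G.irrefl (v := w)), indP_false ((localComp G v).irrefl (v := w))]
    by_cases h : G.Adj v w <;> simp [indP, h] <;> decide
  · rw [indP_false huw]
    have hne : u ≠ w := fun h => huw h.symm
    by_cases hA : G.Adj u w <;> by_cases hB : G.Adj v u <;> by_cases hC : G.Adj v w <;>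
      rw [localComp_adj] <;>
      simp [indP, hA, hB, hC, hne] <;> decide

lemma Fpar_localComp (G : SimpleGraph V) (v : V) (K : Set V) (u : V) :
    Fpar (localComp G v) K u
      = Fpar G K u + indP (G.Adj v u) * Fpar G K v + indP (G.Adj v u) * indP (u ∈ K) := by
  classical
  rw [Fpar, Fpar, Fpar]
  simp_rw [indP_localComp, add_mul]
  rw [Finset.sum_add_distrib, Finset.sum_add_distrib]
  congr 1
  · congr 1
    rw [Finset.mul_sum]
    congr 1; ext w; ring
  · rw [show indP (G.Adj v u) * indP (u ∈ K)
        = if u ∈ Finset.univ then indP (G.Adj v u) * indP (u ∈ K) else 0 by simp,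
      ← Finset.sum_ite_eq' Finset.univ u (fun _ => indP (G.Adj v u) * indP (u ∈ K))]
    congr 1; ext w
    by_cases h : w = u
    · subst h; rw [indP_true rfl, one_mul, if_pos rfl]
    · rw [indP_false h, zero_mul, zero_mul, if_neg h]

lemma Fpar_point (G : SimpleGraph V) (K K' : Set V) (v : V)
    (h : ∀ w, indP (w ∈ K') = indP (w ∈ K) + indP (w = v)) (u : V) :
    Fpar G K' u = Fpar G K u + indP (G.Adj u v) := by
  classical
  rw [Fpar, Fpar]
  simp_rw [h, mul_add]
  rw [Finset.sum_add_distrib]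
  congr 1
  rw [show indP (G.Adj u v) = if v ∈ Finset.univ then indP (G.Adj u v) else 0 by simp,
    ← Finset.sum_ite_eq' Finset.univ v (fun _ => indP (G.Adj u v))]
  congr 1; ext w
  by_cases hw : w = v
  · subst hw; rw [indP_true rfl, mul_one, if_pos rfl]
  · rw [indP_false hw, mul_zero, if_neg hw]

lemma Fpar_diff_singleton (G : SimpleGraph V) (K : Set V) (v : V) (hv : v ∈ K) (u : V) :
    Fpar G (K \ {v}) u = Fpar G K u + indP (G.Adj u v) := by
  apply Fpar_point
  intro w
  by_cases hw : w = v
  · subst hw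
    rw [indP_false (fun h => h.2 rfl), indP_true hv, indP_true rfl]
    decide
  · rw [indP_false hw, add_zero]
    congr 1
    simp [hw]

lemma Fpar_insert (G : SimpleGraph V) (K : Set V) (v : V) (hv : v ∉ K) (u : V) :
    Fpar G (insert v K) u = Fpar G K u + indP (G.Adj u v) := by
  apply Fpar_point
  intro w
  by_cases hw : w = v
  · subst hw
    rw [indP_true (Set.mem_insert w K), indP_false hv, indP_true rfl, zero_add]
  · rw [indP_false hw, add_zero]
    congr 1
    simp [hw]

lemma Fpar_singleton_self (G : SimpleGraph V) (v : V) : Fpar G {v} v = 0 := by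
  rw [← even_iff_Fpar]
  have : G.neighborSet v ∩ {v} = ∅ := by
    ext w
    simp only [Set.mem_inter_iff, Set.mem_singleton_iff, Set.mem_empty_iff_false, iff_false]
    rintro ⟨h1, rfl⟩
    exact G.irrefl h1
  rw [this]
  simp

lemma aux_val_le (G G' : SimpleGraph V) (K K' : Set V)
    (hsub : K' ⊆ K ∪ suppF G K)
    (hF : ∀ u, u ∉ K → Fpar G' K' u = Fpar G K u) :
    valF G' K' ≤ valF G K := by
  apply Set.ncard_le_ncard _ (Set.toFinite _)
  intro u hu
  rcases hu with h | h
  · exact hsub h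
  · by_cases hK : u ∈ K
    · exact Or.inl hK
    · refine Or.inr ?_
      have := hF u hK
      rw [suppF, Set.mem_setOf_eq] at h ⊢
      rw [← this]
      exact h

lemma valF_even_move (G : SimpleGraph V) (v : V) (K : Set V) (hv : Fpar G K v = 0) :
    valF (localComp G v) K ≤ valF G K := by
  apply aux_val_le _ _ _ _ Set.subset_union_left
  intro u hu
  rw [Fpar_localComp, hv, mul_zero, add_zero, indP_false hu, mul_zero, add_zero]

lemma valF_odd_in_move (G : SimpleGraph V) (v : V) (K : Set V) (hv : Fpar G K v = 1)
    (hvK : v ∈ K) : valF (localComp G v) (K \ {v}) ≤ valF G K := by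
  apply aux_val_le _ _ _ _ (Set.diff_subset.trans Set.subset_union_left)
  intro u hu
  rw [Fpar_diff_singleton _ _ _ hvK, Fpar_localComp, hv, mul_one, indP_false hu, mul_zero,
    add_zero, localComp_adj_right, adj_comm]
  ring_nf
  rw [show (2 : ZMod 2) = 0 from rfl, mul_zero, add_zero]

lemma valF_odd_out_move (G : SimpleGraph V) (v : V) (K : Set V) (hv : Fpar G K v = 1)
    (hvK : v ∉ K) : valF (localComp G v) (insert v K) ≤ valF G K := by
  apply aux_val_le
  · rw [Set.insert_subset_iff]
    exact ⟨Or.inr hv, Set.subset_union_left⟩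
  · intro u hu
    rw [Fpar_insert _ _ _ hvK, Fpar_localComp, hv, mul_one, indP_false hu, mul_zero,
      add_zero, localComp_adj_right, adj_comm]
    ring_nf
    rw [show (2 : ZMod 2) = 0 from rfl, mul_zero, add_zero]

lemma diff_nonempty_of_Fpar_one (G : SimpleGraph V) (K : Set V) (v : V) (hK : K.Nonempty)
    (hv : Fpar G K v = 1) (hvK : v ∈ K) : (K \ {v}).Nonempty := by
  rw [Set.nonempty_iff_ne_empty]
  intro h
  have hKv : K = {v} := (Set.Nonempty.subset_singleton_iff hK).mp (Set.diff_eq_empty.mp h)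
  rw [hKv, Fpar_singleton_self] at hv
  exact absurd hv (by decide)

-- min degree lemmas
lemma minDegree_le (G : SimpleGraph V) (x : V) : minDegree G ≤ (G.neighborSet x).ncard :=
  Nat.sInf_le ⟨x, rfl⟩

lemma minDegreeLoc_le_minDegree (G : SimpleGraph V) : minDegreeLoc G ≤ minDegree G :=
  Nat.sInf_le ⟨[], rfl⟩

lemma minDegreeLoc_le_localComp (G : SimpleGraph V) (v : V) :
    minDegreeLoc G ≤ minDegreeLoc (localComp G v) := by
  have hne : {n | ∃ l : List V, minDegree (l.foldl localComp (localComp G v)) = n}.Nonempty :=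
    ⟨minDegree (localComp G v), [], rfl⟩
  obtain ⟨l, hl⟩ := Nat.sInf_mem hne
  exact Nat.sInf_le ⟨v :: l, hl⟩

lemma minDegreeLoc_localComp (G : SimpleGraph V) (v : V) :
    minDegreeLoc (localComp G v) = minDegreeLoc G := by
  have h1 := minDegreeLoc_le_localComp G v
  have h2 := minDegreeLoc_le_localComp (localComp G v) v
  rw [localComp_involutive] at h2
  omega

lemma lemmaC : ∀ (n : ℕ) (G : SimpleGraph V) (K : Set V), K.Nonempty → K.ncard ≤ n →
    minDegreeLoc G + 1 ≤ valF G K := by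
  intro n
  induction n with
  | zero =>
    intro G K hK h0
    have := (Set.ncard_pos (Set.toFinite K)).mpr hK
    omega
  | succ n ih =>
    intro G K hK hcard
    by_cases h1 : ∃ x ∈ K, Fpar G K x = 1
    · obtain ⟨x, hxK, hx⟩ := h1
      have hK' := diff_nonempty_of_Fpar_one G K x hK hx hxK
      have hc : (K \ {x}).ncard ≤ n := by
        have := Set.ncard_diff_singleton_add_one hxK (Set.toFinite K)
        omega
      calc minDegreeLoc G + 1 = minDegreeLoc (localComp G x) + 1 := by
              rw [minDegreeLoc_localComp]
        _ ≤ valF (localComp G x) (K \ {x}) := ih (localComp G x) _ hK' hc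
        _ ≤ valF G K := valF_odd_in_move G x K hx hxK
    · push_neg at h1
      have h1' : ∀ x ∈ K, Fpar G K x = 0 := fun x hx =>
        (zmod2_cases _).resolve_right (h1 x hx)
      by_cases h2 : ∃ x ∈ K, ∃ w, G.Adj x w ∧ Fpar G K w = 0
      · obtain ⟨x, hxK, w, hadj, hw⟩ := h2
        set G' := localComp G w with hG'
        have hev : valF G' K ≤ valF G K := valF_even_move G w K hw
        have hflip : Fpar G' K x = 1 := by
          rw [hG', Fpar_localComp, h1' x hxK, hw, mul_zero, add_zero,
            indP_true (G.adj_symm hadj), indP_true hxK, one_mul, zero_add]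
        have hK' := diff_nonempty_of_Fpar_one G' K x hK hflip hxK
        have hc : (K \ {x}).ncard ≤ n := by
          have := Set.ncard_diff_singleton_add_one hxK (Set.toFinite K)
          omega
        calc minDegreeLoc G + 1 = minDegreeLoc (localComp G' x) + 1 := by
              rw [minDegreeLoc_localComp, hG', minDegreeLoc_localComp]
          _ ≤ valF (localComp G' x) (K \ {x}) := ih _ _ hK' hc
          _ ≤ valF G' K := valF_odd_in_move G' x K hflip hxK
          _ ≤ valF G K := hev
      · push_neg at h2
        obtain ⟨x, hxK⟩ := hK
        have hNx : G.neighborSet x ⊆ (K ∪ suppF G K) \ K := by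
          intro w hw
          rw [SimpleGraph.mem_neighborSet] at hw
          have hw1 : Fpar G K w = 1 :=
            (zmod2_cases _).resolve_left (h2 x hxK w hw)
          constructor
          · exact Or.inr hw1
          · intro hwK
            exact absurd hw1 (h1 w hwK)
        have hdeg : (G.neighborSet x).ncard ≤ ((K ∪ suppF G K) \ K).ncard :=
          Set.ncard_le_ncard hNx (Set.toFinite _)
        have hdiff : ((K ∪ suppF G K) \ K).ncard + K.ncard = (K ∪ suppF G K).ncard :=
          Set.ncard_diff_add_ncard_of_subset Set.subset_union_left (Set.toFinite _)
        have hkpos : 0 < K.ncard := (Set.ncard_pos (Set.toFinite K)).mpr ⟨x, hxK⟩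
        have hmd : minDegree G ≤ (G.neighborSet x).ncard := minDegree_le G x
        have hloc : minDegreeLoc G ≤ minDegree G := minDegreeLoc_le_minDegree G
        rw [valF]
        omega

variable [Nonempty V]

noncomputable def gval (G : SimpleGraph V) : ℕ :=
  sInf {n | ∃ K : Set V, K.Nonempty ∧ valF G K = n}

lemma gval_set_nonempty (G : SimpleGraph V) :
    {n | ∃ K : Set V, K.Nonempty ∧ valF G K = n}.Nonempty :=
  ⟨valF G {Classical.arbitrary V}, {Classical.arbitrary V}, Set.singleton_nonempty _, rfl⟩

lemma gval_le (G : SimpleGraph V) (K : Set V) (hK : K.Nonempty) : gval G ≤ valF G K :=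
  Nat.sInf_le ⟨K, hK, rfl⟩

lemma gval_exists (G : SimpleGraph V) : ∃ K : Set V, K.Nonempty ∧ valF G K = gval G :=
  Nat.sInf_mem (gval_set_nonempty G)

lemma gval_localComp_le (G : SimpleGraph V) (v : V) : gval (localComp G v) ≤ gval G := by
  obtain ⟨K, hK, hval⟩ := gval_exists G
  rcases zmod2_cases (Fpar G K v) with h | h
  · exact le_trans (gval_le _ K hK) (hval ▸ valF_even_move G v K h)
  · by_cases hvK : v ∈ K
    · exact le_trans (gval_le _ _ (diff_nonempty_of_Fpar_one G K v hK h hvK))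
        (hval ▸ valF_odd_in_move G v K h hvK)
    · exact le_trans (gval_le _ _ ((Set.insert_nonempty v K)))
        (hval ▸ valF_odd_out_move G v K h hvK)

lemma gval_localComp (G : SimpleGraph V) (v : V) : gval (localComp G v) = gval G := by
  have h1 := gval_localComp_le G v
  have h2 := gval_localComp_le (localComp G v) v
  rw [localComp_involutive] at h2
  omega

lemma gval_foldl (G : SimpleGraph V) (l : List V) : gval (l.foldl localComp G) = gval G := by
  induction l generalizing G with
  | nil => rfl
  | cons v l ih => rw [List.foldl_cons, ih, gval_localComp]

lemma valF_singleton (G : SimpleGraph V) (v : V) :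
    valF G {v} = (G.neighborSet v).ncard + 1 := by
  have hsupp : suppF G {v} = G.neighborSet v := by
    ext u
    rw [suppF, Set.mem_setOf_eq, zmod2_eq_one_iff, ← even_iff_Fpar,
      SimpleGraph.mem_neighborSet]
    by_cases h : G.Adj u v
    · have : G.neighborSet u ∩ {v} = {v} := by
        ext w
        simp only [Set.mem_inter_iff, Set.mem_singleton_iff, SimpleGraph.mem_neighborSet,
          and_iff_right_iff_imp]
        rintro rfl
        exact h
      rw [this, Set.ncard_singleton]
      simp [G.adj_symm h]
    · have : G.neighborSet u ∩ {v} = ∅ := by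
        ext w
        simp only [Set.mem_inter_iff, Set.mem_singleton_iff, SimpleGraph.mem_neighborSet,
          Set.mem_empty_iff_false, iff_false, not_and]
        rintro hw rfl
        exact h hw
      rw [this]
      simp only [Set.ncard_empty, Even.zero, not_true_eq_false, false_iff]
      intro hc
      exact h (G.adj_symm hc)
  have hnm : v ∉ G.neighborSet v := fun h => G.irrefl h
  rw [valF, hsupp, Set.singleton_union, Set.ncard_insert_of_notMem hnm (Set.toFinite _)]

lemma gval_le_minDegree_succ (G : SimpleGraph V) : gval G ≤ minDegree G + 1 := by
  have hne : (Set.range fun v => (G.neighborSet v).ncard).Nonempty :=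
    ⟨(G.neighborSet (Classical.arbitrary V)).ncard, Classical.arbitrary V, rfl⟩
  obtain ⟨v, hv⟩ := Nat.sInf_mem hne
  calc gval G ≤ valF G {v} := gval_le G {v} (Set.singleton_nonempty v)
    _ = (G.neighborSet v).ncard + 1 := valF_singleton G v
    _ = minDegree G + 1 := by
        have hv' : (G.neighborSet v).ncard = minDegree G := hv
        rw [hv']

lemma key_eq (G : SimpleGraph V) : minDegreeLoc G + 1 = gval G := by
  have h1 : gval G ≤ minDegreeLoc G + 1 := by
    have hne : {n | ∃ l : List V, minDegree (l.foldl localComp G) = n}.Nonempty :=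
      ⟨minDegree G, [], rfl⟩
    obtain ⟨l, hl⟩ := Nat.sInf_mem hne
    calc gval G = gval (l.foldl localComp G) := (gval_foldl G l).symm
      _ ≤ minDegree (l.foldl localComp G) + 1 := gval_le_minDegree_succ _
      _ = minDegreeLoc G + 1 := by rw [hl]; rfl
  have h2 : minDegreeLoc G + 1 ≤ gval G := by
    obtain ⟨K, hK, hval⟩ := gval_exists G
    exact hval ▸ lemmaC K.ncard G K hK le_rfl
  omega

lemma LES_iff (G : SimpleGraph V) (d' : ℕ) :
    (∃ K : Set V, LocallyEvenlySeen G d' K) ↔ (gval G ≤ d' ∧ d' ≤ Fintype.card V) := by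
  constructor
  · rintro ⟨K, hKne, D, hKD, hDcard, hEven⟩
    have hsub : K ∪ suppF G K ⊆ D := by
      rintro u (h | h)
      · exact hKD h
      · by_contra hu
        have := (even_iff_Fpar G K u).mp (hEven u hu)
        rw [suppF, Set.mem_setOf_eq, this] at h
        exact absurd h (by decide)
    constructor
    · calc gval G ≤ valF G K := gval_le G K hKne
        _ ≤ D.ncard := Set.ncard_le_ncard hsub (Set.toFinite D)
        _ = d' := hDcard
    · rw [← hDcard]
      calc D.ncard ≤ (Set.univ : Set V).ncard :=
            Set.ncard_le_ncard (Set.subset_univ D) (Set.toFinite _)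
        _ = Fintype.card V := by rw [Set.ncard_univ, Nat.card_eq_fintype_card]
  · rintro ⟨hg, hcard⟩
    obtain ⟨K, hKne, hval⟩ := gval_exists G
    have h1 : (K ∪ suppF G K).ncard ≤ d' := by rw [← valF] at *; omega
    have h2 : d' ≤ (Set.univ : Set V).ncard := by
      rw [Set.ncard_univ, Nat.card_eq_fintype_card]; exact hcard
    obtain ⟨D, hsD, _, hDcard⟩ :=
      Set.exists_subsuperset_card_eq (Set.subset_univ (K ∪ suppF G K)) h1 h2
    refine ⟨K, hKne, D, Set.subset_union_left.trans hsD, hDcard, ?_⟩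
    intro u hu
    rw [even_iff_Fpar]
    rcases zmod2_cases (Fpar G K u) with h | h
    · exact h
    · exact absurd (hsD (Or.inr h)) hu


end Par

/-- `δ_loc(G) = d - 1` iff `G` has a `d`-locally evenly seen set
and no `(d-1)`-locally evenly seen set (for `d ≥ 1`, nonempty vertex set). -/
theorem statement_6 [Fintype V] [Nonempty V] (G : SimpleGraph V) (d : ℕ) (hd : 1 ≤ d) :
    minDegreeLoc G = d - 1 ↔
      ((∃ K : Set V, LocallyEvenlySeen G d K) ∧
        ¬ ∃ K : Set V, LocallyEvenlySeen G (d - 1) K) := by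
  have hkey := key_eq G
  have hcard : gval G ≤ Fintype.card V := by
    have h1 := gval_le_minDegree_succ G
    have hv := Classical.arbitrary V
    have h2 : minDegree G ≤ (G.neighborSet hv).ncard := minDegree_le G hv
    have h3 : (G.neighborSet hv).ncard < Fintype.card V := by
      have hsub : G.neighborSet hv ⊆ Set.univ \ {hv} := by
        intro w hw
        refine ⟨Set.mem_univ w, ?_⟩
        intro hc
        rw [Set.mem_singleton_iff] at hc
        subst hc
        exact G.irrefl hw
      have h4 : (Set.univ \ {hv} : Set V).ncard + 1 = (Set.univ : Set V).ncard :=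
        Set.ncard_diff_singleton_add_one (Set.mem_univ hv) (Set.toFinite _)
      have h5 : (G.neighborSet hv).ncard ≤ (Set.univ \ {hv} : Set V).ncard :=
        Set.ncard_le_ncard hsub (Set.toFinite _)
      have h6 : (Set.univ : Set V).ncard = Fintype.card V := by
        rw [Set.ncard_univ, Nat.card_eq_fintype_card]
      omega
    omega
  rw [LES_iff, LES_iff]
  omega
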